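/- Let n, f, g be integers with 1 ≤ g ≤ f ≤ n, and S_M = {σ ∈ S_n : σ(i) ≥ g+1 for all i > f}. Then the number of σ ∈ S_M having at least one fixed point in {1, ..., g} is |S_M| · Σ_{k=1}^{g} (−1)^{k+1} · binom(g, k) · (f − k)!/f!. -/

import Mathlib

open Finset Equiv Function

section Counting

variable {α : Type*} [Fintype α] [DecidableEq α]

variable (p q : α → Prop) [DecidablePred p] [DecidablePred q] (T : Finset α)
  (β : {a // p a} ↪ {a // q a})

/-- Auxiliary function extending `β` to a map `α → α`, using fixed points on `T` and an
equivalence `e` on the rest. -/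
private def jfun
    (e : {a // ¬ p a ∧ a ∉ T} ≃ {b // (∀ x : {a // p a}, ((β x : {a // q a}) : α) ≠ b) ∧ b ∉ T})
    (a : α) : α :=
  if h : p a then ((β ⟨a, h⟩ : {a // q a}) : α)
  else if ht : a ∈ T then a
  else ((e ⟨a, h, ht⟩ : {b // (∀ x : {a // p a}, ((β x : {a // q a}) : α) ≠ b) ∧ b ∉ T}) : α)

private lemma jfun_injective (hTq : ∀ a ∈ T, ¬ q a)
    (e : {a // ¬ p a ∧ a ∉ T} ≃ {b // (∀ x : {a // p a}, ((β x : {a // q a}) : α) ≠ b) ∧ b ∉ T}) :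
    Function.Injective (jfun p q T β e) := by
  intro a b hab
  unfold jfun at hab
  by_cases ha : p a <;> by_cases hb : p b
  · rw [dif_pos ha, dif_pos hb] at hab
    exact congrArg Subtype.val (β.injective (Subtype.ext hab))
  · rw [dif_pos ha, dif_neg hb] at hab
    by_cases hbt : b ∈ T
    · rw [dif_pos hbt] at hab
      exact absurd (hab ▸ (β ⟨a, ha⟩).2) (hTq b hbt)
    · rw [dif_neg hbt] at hab
      exact absurd hab ((e ⟨b, hb, hbt⟩).2.1 ⟨a, ha⟩)
  · rw [dif_neg ha, dif_pos hb] at hab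
    by_cases hat : a ∈ T
    · rw [dif_pos hat] at hab
      exact absurd (hab.symm ▸ (β ⟨b, hb⟩).2) (hTq a hat)
    · rw [dif_neg hat] at hab
      exact absurd hab.symm ((e ⟨a, ha, hat⟩).2.1 ⟨b, hb⟩)
  · rw [dif_neg ha, dif_neg hb] at hab
    by_cases hat : a ∈ T <;> by_cases hbt : b ∈ T
    · rwa [dif_pos hat, dif_pos hbt] at hab
    · rw [dif_pos hat, dif_neg hbt] at hab
      exact absurd (hab ▸ hat) (e ⟨b, hb, hbt⟩).2.2
    · rw [dif_neg hat, dif_pos hbt] at hab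
      exact absurd (hab ▸ hbt) (e ⟨a, ha, hat⟩).2.2
    · rw [dif_neg hat, dif_neg hbt] at hab
      exact congrArg Subtype.val (e.injective (Subtype.ext hab))

/-- The number of permutations agreeing with `β` on `{a // p a}` and fixing `T` pointwise. -/
private lemma fiber_card (hTp : ∀ a ∈ T, ¬ p a) (hTq : ∀ a ∈ T, ¬ q a) :
    (univ.filter (fun σ : Equiv.Perm α =>
        (∀ a ∈ T, σ a = a) ∧ ∀ a : {x // p x}, σ a = ((β a : {x // q x}) : α))).card
      = (Fintype.card α - Fintype.card {a // p a} - T.card).factorial := by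
  classical
  have hβinj : Function.Injective (fun x : {a // p a} => ((β x : {a // q a}) : α)) :=
    fun x y h => β.injective (Subtype.ext h)
  have hNPT : Fintype.card {a // ¬ p a ∧ a ∉ T}
      = Fintype.card α - Fintype.card {a // p a} - T.card := by
    rw [Fintype.card_subtype, Fintype.card_subtype]
    have h1 : (univ.filter fun a : α => ¬ p a ∧ a ∉ T) = (univ.filter (fun x => p x) ∪ T)ᶜ := by
      ext a; simp [not_or]
    have hdisj : Disjoint (univ.filter (fun x => p x)) T := by
      rw [Finset.disjoint_left]
      intro a ha haT
      exact hTp a haT (mem_filter.1 ha).2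
    rw [h1, card_compl, card_union_of_disjoint hdisj]
    omega
  have hC : Fintype.card {b // (∀ x : {a // p a}, ((β x : {a // q a}) : α) ≠ b) ∧ b ∉ T}
      = Fintype.card α - Fintype.card {a // p a} - T.card := by
    rw [Fintype.card_subtype]
    have h2 : (univ.filter fun b : α => (∀ x : {a // p a}, ((β x : {a // q a}) : α) ≠ b) ∧ b ∉ T)
        = ((univ.image fun x : {a // p a} => ((β x : {a // q a}) : α)) ∪ T)ᶜ := by
      ext b
      simp only [mem_filter, mem_univ, true_and, mem_compl, mem_union, mem_image, not_or,
        not_exists]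
    have hdisj : Disjoint (univ.image fun x : {a // p a} => ((β x : {a // q a}) : α)) T := by
      rw [Finset.disjoint_left]
      intro b hb hbT
      obtain ⟨x, -, rfl⟩ := mem_image.1 hb
      exact hTq _ hbT (β x).2
    rw [h2, card_compl, card_union_of_disjoint hdisj, card_image_of_injective _ hβinj, card_univ]
    omega
  have hcards : Fintype.card {a // ¬ p a ∧ a ∉ T}
      = Fintype.card {b // (∀ x : {a // p a}, ((β x : {a // q a}) : α) ≠ b) ∧ b ∉ T} :=
    hNPT.trans hC.symm
  have key : ∀ σ : Equiv.Perm α,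
      ((∀ a ∈ T, σ a = a) ∧ ∀ a : {x // p x}, σ a = ((β a : {x // q x}) : α)) →
      ∀ a : {a // ¬ p a ∧ a ∉ T},
        (∀ x : {a // p a}, ((β x : {a // q a}) : α) ≠ σ a.1) ∧ σ a.1 ∉ T := by
    intro σ hσ a
    constructor
    · intro x hx
      have : σ x.1 = σ a.1 := by rw [hσ.2 x, hx]
      exact a.2.1 (σ.injective this ▸ x.2)
    · intro hmem
      have h1 : σ (σ a.1) = σ a.1 := hσ.1 _ hmem
      have h2 : σ a.1 = a.1 := σ.injective h1
      exact a.2.2 (h2 ▸ hmem)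
  have hcb := Finset.card_bij'
    (s := univ.filter (fun σ : Equiv.Perm α =>
        (∀ a ∈ T, σ a = a) ∧ ∀ a : {x // p x}, σ a = ((β a : {x // q x}) : α)))
    (t := (univ : Finset ({a // ¬ p a ∧ a ∉ T}
      ≃ {b // (∀ x : {a // p a}, ((β x : {a // q a}) : α) ≠ b) ∧ b ∉ T})))
    (fun σ hσ => Equiv.ofBijective
      (fun a => (⟨σ a.1, key σ (mem_filter.1 hσ).2 a⟩ :
        {b // (∀ x : {a // p a}, ((β x : {a // q a}) : α) ≠ b) ∧ b ∉ T}))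
      ((Fintype.bijective_iff_injective_and_card _).2
        ⟨fun a b h => Subtype.ext (σ.injective (congrArg Subtype.val h)), hcards⟩))
    (fun e _ => Equiv.ofBijective (jfun p q T β e)
      (Finite.injective_iff_bijective.1 (jfun_injective p q T β hTq e)))
    (fun σ hσ => mem_univ _)
    (fun e he => by
      simp only [mem_filter, mem_univ, true_and]
      constructor
      · intro a haT
        show jfun p q T β e a = a
        rw [jfun, dif_neg (hTp a haT), dif_pos haT]
      · intro x
        show jfun p q T β e x.1 = _
        rw [jfun, dif_pos x.2])
    (fun σ hσ => by
      ext x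
      show jfun p q T β _ x = σ x
      rw [jfun]
      by_cases h : p x
      · rw [dif_pos h]
        exact ((mem_filter.1 hσ).2.2 ⟨x, h⟩).symm
      · rw [dif_neg h]
        by_cases ht : x ∈ T
        · rw [dif_pos ht]
          exact ((mem_filter.1 hσ).2.1 x ht).symm
        · rw [dif_neg ht]
          rfl)
    (fun e he => by
      ext a
      show jfun p q T β e a.1 = ((e a :
        {b // (∀ x : {a // p a}, ((β x : {a // q a}) : α) ≠ b) ∧ b ∉ T}) : α)
      rw [jfun, dif_neg a.2.1, dif_neg a.2.2])
  rw [hcb, card_univ, Fintype.card_equiv (Fintype.equivOfCardEq hcards), hNPT]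

/-- Main counting lemma: the number of permutations mapping `p`-elements to `q`-elements
and fixing `T` pointwise. -/
private lemma count_main (hTp : ∀ a ∈ T, ¬ p a) (hTq : ∀ a ∈ T, ¬ q a) :
    (univ.filter fun σ : Equiv.Perm α => (∀ a, p a → q (σ a)) ∧ ∀ a ∈ T, σ a = a).card
      = (Fintype.card {a // q a}).descFactorial (Fintype.card {a // p a})
        * (Fintype.card α - Fintype.card {a // p a} - T.card).factorial := by
  classical
  have hset : (univ.filter fun σ : Equiv.Perm α => (∀ a, p a → q (σ a)) ∧ ∀ a ∈ T, σ a = a)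
      = (univ : Finset ({a // p a} ↪ {a // q a})).biUnion (fun β =>
          univ.filter (fun σ : Equiv.Perm α =>
            (∀ a ∈ T, σ a = a) ∧ ∀ a : {x // p x}, σ a = ((β a : {x // q x}) : α))) := by
    ext σ
    simp only [mem_filter, mem_univ, true_and, mem_biUnion]
    constructor
    · rintro ⟨hpq, hT⟩
      exact ⟨⟨fun x => ⟨σ x, hpq x x.2⟩,
        fun x y hxy => Subtype.ext (σ.injective (congrArg Subtype.val hxy))⟩,
        hT, fun a => rfl⟩
    · rintro ⟨β, hT, hβ⟩
      refine ⟨fun a ha => ?_, hT⟩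
      rw [show σ a = ((β ⟨a, ha⟩ : {x // q x}) : α) from hβ ⟨a, ha⟩]
      exact (β ⟨a, ha⟩).2
  rw [hset, card_biUnion]
  · rw [sum_congr rfl (fun β _ => fiber_card p q T β hTp hTq), sum_const, card_univ,
      Fintype.card_embedding_eq, smul_eq_mul]
  · intro β hβ β' hβ' hne
    rw [Function.onFun, Finset.disjoint_left]
    intro σ hσ hσ'
    refine hne (DFunLike.ext β β' fun x => Subtype.ext ?_)
    exact ((mem_filter.1 hσ).2.2 x).symm.trans ((mem_filter.1 hσ').2.2 x)

private lemma card_filter_le (n c : ℕ) (hc : c ≤ n) :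
    Fintype.card {a : Fin n // c ≤ a.val} = n - c := by
  rw [Fintype.card_subtype]
  have himg : (univ.filter fun a : Fin n => c ≤ a.val).image Fin.val = Finset.Ico c n := by
    ext x
    simp only [mem_image, mem_filter, mem_univ, true_and, Finset.mem_Ico]
    constructor
    · rintro ⟨a, ha, rfl⟩; exact ⟨ha, a.isLt⟩
    · rintro ⟨h1, h2⟩; exact ⟨⟨x, h2⟩, h1, rfl⟩
  rw [← Nat.card_Ico c n, ← himg, card_image_of_injective _ Fin.val_injective]

private lemma card_filter_lt (n c : ℕ) (hc : c ≤ n) :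
    (univ.filter fun a : Fin n => a.val < c).card = c := by
  have himg : (univ.filter fun a : Fin n => a.val < c).image Fin.val = Finset.range c := by
    ext x
    simp only [mem_image, mem_filter, mem_univ, true_and, Finset.mem_range]
    constructor
    · rintro ⟨a, ha, rfl⟩; exact ha
    · intro h; exact ⟨⟨x, lt_of_lt_of_le h hc⟩, h, rfl⟩
  have h2 := card_image_of_injective (univ.filter fun a : Fin n => a.val < c) Fin.val_injective
  rw [himg, Finset.card_range] at h2
  exact h2.symm

end Counting

/-- inclusion-exclusion count of the elements of `S_M` having at
least one fixed point among the first `g` positions. -/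
theorem stmt12 (n f g : ℕ) (hg : 1 ≤ g) (hgf : g ≤ f) (hfn : f ≤ n) :
    (Set.ncard {σ : Equiv.Perm (Fin n) |
        (∀ i : Fin n, f ≤ i.val → g ≤ (σ i).val) ∧ ∃ i : Fin n, i.val < g ∧ σ i = i} : ℚ)
      = (Set.ncard {σ : Equiv.Perm (Fin n) |
            ∀ i : Fin n, f ≤ i.val → g ≤ (σ i).val} : ℚ)
        * ∑ k ∈ Finset.Icc 1 g,
            (-1 : ℚ)^(k+1) * (g.choose k) * (Nat.factorial (f - k)) / Nat.factorial f := by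
  classical
  have hgn : g ≤ n := hgf.trans hfn
  set Dg : ℕ := (n - g).descFactorial (n - f) with hDg
  -- key counting fact
  have hcards : ∀ T : Finset (Fin n), (∀ i ∈ T, i.val < g) →
      (univ.filter fun σ : Equiv.Perm (Fin n) =>
          (∀ i : Fin n, f ≤ i.val → g ≤ (σ i).val) ∧ ∀ i ∈ T, σ i = i).card
        = Dg * (f - T.card).factorial := by
    intro T hT
    have h := count_main (fun a : Fin n => f ≤ a.val) (fun a : Fin n => g ≤ a.val) T
      (fun a ha => by have := hT a ha; omega)
      (fun a ha => by have := hT a ha; omega)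
    rw [card_filter_le n f hfn, card_filter_le n g hgn, Fintype.card_fin,
      show n - (n - f) = f by omega] at h
    beta_reduce at h
    convert h using 2
    ext σ
    simp only [Finset.mem_filter]
  -- ncard to filter card
  have hnc : ∀ (P : Equiv.Perm (Fin n) → Prop) [DecidablePred P],
      ({σ : Equiv.Perm (Fin n) | P σ} : Set _).ncard = (univ.filter P).card := by
    intro P hP
    rw [Set.ncard_eq_toFinset_card', Set.toFinset_setOf]
  set s : Finset (Fin n) := univ.filter (fun i : Fin n => i.val < g) with hs
  set S : Fin n → Finset (Equiv.Perm (Fin n)) := fun i => univ.filter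
    (fun σ : Equiv.Perm (Fin n) => (∀ a : Fin n, f ≤ a.val → g ≤ (σ a).val) ∧ σ i = i) with hS
  have hUnion : (univ.filter fun σ : Equiv.Perm (Fin n) =>
      (∀ i : Fin n, f ≤ i.val → g ≤ (σ i).val) ∧ ∃ i : Fin n, i.val < g ∧ σ i = i)
      = s.biUnion S := by
    ext σ
    simp only [mem_filter, mem_univ, true_and, mem_biUnion]
    constructor
    · rintro ⟨h1, i, h2, h3⟩
      exact ⟨i, mem_filter.2 ⟨mem_univ _, h2⟩, mem_filter.2 ⟨mem_univ _, h1, h3⟩⟩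
    · rintro ⟨i, hi, hσ⟩
      obtain ⟨-, h1, h2⟩ := mem_filter.1 hσ
      exact ⟨h1, i, (mem_filter.1 hi).2, h2⟩
  have hscard : #s = g := card_filter_lt n g hgn
  -- the inf' of the S i over a nonempty t
  have hinf : ∀ (t : Finset (Fin n)) (hne : t.Nonempty), t ⊆ s →
      #(t.inf' hne S) = Dg * (f - #t).factorial := by
    intro t hne hts
    have hEq : t.inf' hne S = univ.filter (fun σ : Equiv.Perm (Fin n) =>
        (∀ a : Fin n, f ≤ a.val → g ≤ (σ a).val) ∧ ∀ i ∈ t, σ i = i) := by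
      ext σ
      rw [Finset.mem_inf']
      simp only [hS, mem_filter, mem_univ, true_and]
      constructor
      · intro h
        obtain ⟨i0, hi0⟩ := hne
        exact ⟨(h i0 hi0).1, fun i hi => (h i hi).2⟩
      · rintro ⟨h1, h2⟩ i hi
        exact ⟨h1, h2 i hi⟩
    rw [hEq, hcards t (fun i hi => (mem_filter.1 (hts hi)).2)]
  set F : Finset (Fin n) → ℤ :=
    fun t => (-1 : ℤ)^(#t+1) * ((Dg * (f - #t).factorial : ℕ) : ℤ) with hF
  have hIE := Finset.inclusion_exclusion_card_biUnion s S
  have hsum1 : (#(s.biUnion S) : ℤ) = ∑ t ∈ s.powerset.filter (·.Nonempty), F t := by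
    rw [hIE, ← Finset.sum_coe_sort (s.powerset.filter (·.Nonempty)) F]
    apply Finset.sum_congr rfl
    intro t _
    have ht := Finset.mem_filter.1 t.2
    simp only [hF]
    rw [hinf t.1 ht.2 (Finset.mem_powerset.1 ht.1)]
  have hAc : s.powerset.filter (fun t => ¬ t.Nonempty) = {∅} := by
    ext t
    simp only [mem_filter, Finset.not_nonempty_iff_eq_empty, Finset.mem_powerset,
      Finset.mem_singleton]
    constructor
    · rintro ⟨-, h⟩; exact h
    · rintro rfl; exact ⟨Finset.empty_subset _, rfl⟩
  have hsplit := Finset.sum_filter_add_sum_filter_not s.powerset (fun t => t.Nonempty) F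
  rw [hAc, Finset.sum_singleton] at hsplit
  have hpow : ∑ t ∈ s.powerset, F t = ∑ k ∈ Finset.range (g+1),
      (g.choose k : ℤ) * ((-1 : ℤ)^(k+1) * ((Dg * (f - k).factorial : ℕ) : ℤ)) := by
    rw [Finset.powerset_card_disjiUnion]
    erw [Finset.sum_disjiUnion]
    rw [hscard]
    apply Finset.sum_congr rfl
    intro k hk
    calc ∑ t ∈ s.powersetCard k, F t
        = ∑ _t ∈ s.powersetCard k, ((-1 : ℤ)^(k+1) * ((Dg * (f - k).factorial : ℕ) : ℤ)) :=
          Finset.sum_congr rfl (fun t ht => by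
            simp only [hF]
            rw [(Finset.mem_powersetCard.1 ht).2])
      _ = (g.choose k : ℤ) * ((-1 : ℤ)^(k+1) * ((Dg * (f - k).factorial : ℕ) : ℤ)) := by
          rw [Finset.sum_const, Finset.card_powersetCard, hscard, nsmul_eq_mul]
  have hr : Finset.range (g+1) = insert 0 (Finset.Icc 1 g) := by
    ext x; simp [Finset.mem_Icc]; omega
  rw [hr, Finset.sum_insert (by simp)] at hpow
  have hF0 : F ∅ = (g.choose 0 : ℤ) * ((-1 : ℤ)^(0+1) * ((Dg * (f - 0).factorial : ℕ) : ℤ)) := by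
    simp [hF]
  have hmain : (#(s.biUnion S) : ℤ) = ∑ k ∈ Finset.Icc 1 g,
      (g.choose k : ℤ) * ((-1 : ℤ)^(k+1) * ((Dg * (f - k).factorial : ℕ) : ℤ)) := by
    rw [hsum1]
    have := hsplit
    rw [hpow, hF0] at this
    omega
  -- the S_M cardinality
  have hSM : (univ.filter fun σ : Equiv.Perm (Fin n) =>
      ∀ i : Fin n, f ≤ i.val → g ≤ (σ i).val).card = Dg * f.factorial := by
    have h0 := hcards ∅ (by simp)
    rw [show (f - #(∅ : Finset (Fin n))) = f by simp] at h0
    refine Eq.trans ?_ h0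
    congr 1
    ext σ
    simp
  -- put everything together
  rw [hnc (fun σ : Equiv.Perm (Fin n) =>
      (∀ i : Fin n, f ≤ i.val → g ≤ (σ i).val) ∧ ∃ i : Fin n, i.val < g ∧ σ i = i),
    hnc (fun σ : Equiv.Perm (Fin n) => ∀ i : Fin n, f ≤ i.val → g ≤ (σ i).val),
    hUnion, hSM]
  have hcast : (#(s.biUnion S) : ℚ) = ∑ k ∈ Finset.Icc 1 g,
      (g.choose k : ℚ) * ((-1 : ℚ)^(k+1) * ((Dg * (f - k).factorial : ℕ) : ℚ)) := by
    exact_mod_cast congrArg (fun z : ℤ => (z : ℚ)) hmain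
  rw [hcast, Finset.mul_sum]
  apply Finset.sum_congr rfl
  intro k hk
  have hf0 : (f.factorial : ℚ) ≠ 0 := Nat.cast_ne_zero.2 (Nat.factorial_ne_zero f)
  push_cast
  field_simp
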